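/- Let p ≥ 5 be a prime, d = (p−1)/2, and let c be an integer with 0 ≤ c ≤ d−1. Then (1/2)·(D_2^{(2c)}(p) + δ_2^{(2c)}(p)) = (1/24)·(c+1)·(p+1)·(p−2c−1)·(p−c). -/

import Mathlib

/-- The Verlinde formula
`D_g^{(2c)}(p) = (p/4)^{g-1} · Σ_{j=1}^{d} sin(πj(2c+1)/p) · (sin(πj/p))^{1-2g}`. -/
noncomputable def Dverl (g c p : ℕ) : ℝ :=
  ((p : ℝ) / 4) ^ (g - 1) *
    ∑ j ∈ Finset.Icc 1 ((p - 1) / 2),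
      Real.sin (Real.pi * j * (2 * c + 1) / p) *
        Real.sin (Real.pi * j / p) ^ (1 - 2 * (g : ℤ))

/-- The companion formula
`δ_g^{(2c)}(p) = (-1)^c · (4^{1-g}/p) · Σ_{j=1}^{d} sin(πj(2c+1)/p) · sin(πj/p) · (cos(πj/p))^{-2g}`. -/
noncomputable def deltaVerl (g c p : ℕ) : ℝ :=
  (-1) ^ c * ((4 : ℝ) ^ (1 - (g : ℤ)) / p) *
    ∑ j ∈ Finset.Icc 1 ((p - 1) / 2),
      Real.sin (Real.pi * j * (2 * c + 1) / p) * Real.sin (Real.pi * j / p) *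
        Real.cos (Real.pi * j / p) ^ (-(2 * (g : ℤ)))

section VerlindeAux

open Finset Complex

/-- geometric-type power sums -/
lemma sum_pow1 (z : ℂ) (n : ℕ) :
    (∑ m ∈ range n, (m : ℂ) * z ^ m) * (z - 1) ^ 2
      = z ^ n * ((n : ℂ) * (z - 1) - z) + z := by
  induction n with
  | zero => simp only [Finset.range_zero, Finset.sum_empty, Nat.cast_zero, pow_zero,
      zero_mul]; ring
  | succ n ih =>
    rw [Finset.sum_range_succ, add_mul, ih]
    push_cast
    ring

lemma sum_pow2 (z : ℂ) (n : ℕ) :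
    (∑ m ∈ range n, (m : ℂ) ^ 2 * z ^ m) * (z - 1) ^ 3
      = z ^ n * ((n : ℂ) ^ 2 * (z - 1) ^ 2 + 2 * (n : ℂ) * z * (1 - z) + z + z ^ 2)
        - z - z ^ 2 := by
  induction n with
  | zero => simp only [Finset.range_zero, Finset.sum_empty, Nat.cast_zero, pow_zero,
      zero_mul]; ring
  | succ n ih =>
    rw [Finset.sum_range_succ, add_mul, ih]
    push_cast
    ring

lemma sum_pow3 (z : ℂ) (n : ℕ) :
    (∑ m ∈ range n, (m : ℂ) ^ 3 * z ^ m) * (z - 1) ^ 4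
      = z ^ n * ((n : ℂ) ^ 3 * (z - 1) ^ 3 - 3 * (n : ℂ) ^ 2 * z * (z - 1) ^ 2
          + 3 * (n : ℂ) * z * (z - 1) * (z + 1) - (z + 4 * z ^ 2 + z ^ 3))
        + (z + 4 * z ^ 2 + z ^ 3) := by
  induction n with
  | zero => simp only [Finset.range_zero, Finset.sum_empty, Nat.cast_zero, pow_zero,
      zero_mul]; ring
  | succ n ih =>
    rw [Finset.sum_range_succ, add_mul, ih]
    push_cast
    ring

lemma sum_pow4 (z : ℂ) (n : ℕ) :
    (∑ m ∈ range n, (m : ℂ) ^ 4 * z ^ m) * (z - 1) ^ 5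
      = z ^ n * ((n : ℂ) ^ 4 * (z - 1) ^ 4
          + (n : ℂ) ^ 3 * (4 * z - 12 * z ^ 2 + 12 * z ^ 3 - 4 * z ^ 4)
          + (n : ℂ) ^ 2 * (6 * z - 6 * z ^ 2 - 6 * z ^ 3 + 6 * z ^ 4)
          + (n : ℂ) * (4 * z + 12 * z ^ 2 - 12 * z ^ 3 - 4 * z ^ 4)
          + (z + 11 * z ^ 2 + 11 * z ^ 3 + z ^ 4))
        - (z + 11 * z ^ 2 + 11 * z ^ 3 + z ^ 4) := by
  induction n with
  | zero => simp only [Finset.range_zero, Finset.sum_empty, Nat.cast_zero, pow_zero,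
      zero_mul]; ring
  | succ n ih =>
    rw [Finset.sum_range_succ, add_mul, ih]
    push_cast
    ring

/-- coefficient polynomial for `p/(1-z)^4` -/
noncomputable def Pf (P x : ℂ) : ℂ :=
  (-103/360 + 3/4*P + 2/9*P^2 + 1/4*P^3 + 23/360*P^4)
  + (-1 + 11/12*P - 1/6*P^2) * x
  + (-11/12 + 1/2*P - 1/24*P^2) * x^2
  + (-1/3 + 1/12*P) * x^3
  + (-1/24) * x^4

/-- coefficient polynomial for `16/(1+z)^4` (without the alternating sign) -/
noncomputable def Qf (P x : ℂ) : ℂ :=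
  (8 - 22/3*P + 1/3*P^3) + (44/3 - 8*P) * x + (8 - 2*P) * x^2 + 4/3 * x^3

noncomputable def Pcoef (p m : ℕ) : ℂ := Pf (p : ℂ) (m : ℂ)
noncomputable def Qcoef (p m : ℕ) : ℂ := (-1) ^ m * Qf (p : ℂ) (m : ℂ)

lemma Pkey (p : ℕ) (z : ℂ) (hz : z ≠ 1) (hzp : z ^ p = 1) :
    ∑ m ∈ range p, Pcoef p m * z ^ m = (p : ℂ) / (1 - z) ^ 4 := by
  set P : ℂ := (p : ℂ) with hP
  have hz1 : z - 1 ≠ 0 := sub_ne_zero_of_ne hz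
  have h1z : (1 - z) ≠ 0 := fun h => hz (by linear_combination -h)
  have hsplit : ∑ m ∈ range p, Pcoef p m * z ^ m
      = (-103/360 + 3/4*P + 2/9*P^2 + 1/4*P^3 + 23/360*P^4) * (∑ m ∈ range p, z ^ m)
        + (-1 + 11/12*P - 1/6*P^2) * (∑ m ∈ range p, (m : ℂ) * z ^ m)
        + (-11/12 + 1/2*P - 1/24*P^2) * (∑ m ∈ range p, (m : ℂ) ^ 2 * z ^ m)
        + (-1/3 + 1/12*P) * (∑ m ∈ range p, (m : ℂ) ^ 3 * z ^ m)
        + (-1/24) * (∑ m ∈ range p, (m : ℂ) ^ 4 * z ^ m) := by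
    simp only [Finset.mul_sum, ← Finset.sum_add_distrib]
    exact Finset.sum_congr rfl fun m _ => by simp only [Pcoef, Pf]; ring
  have h0 : (∑ m ∈ range p, z ^ m) * (z - 1) = 0 := by
    rw [geom_sum_mul, hzp, sub_self]
  have h1 := sum_pow1 z p; rw [hzp] at h1
  have h2 := sum_pow2 z p; rw [hzp] at h2
  have h3 := sum_pow3 z p; rw [hzp] at h3
  have h4 := sum_pow4 z p; rw [hzp] at h4
  rw [eq_div_iff (pow_ne_zero 4 h1z)]
  refine mul_right_cancel₀ (pow_ne_zero 5 hz1) ?_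
  linear_combination ((1-z)^4*(z-1)^5) * hsplit
    + ((-103/360 + 3/4*P + 2/9*P^2 + 1/4*P^3 + 23/360*P^4)*(1-z)^4*(z-1)^4) * h0
    + ((-1 + 11/12*P - 1/6*P^2)*(1-z)^4*(z-1)^3) * h1
    + ((-11/12 + 1/2*P - 1/24*P^2)*(1-z)^4*(z-1)^2) * h2
    + ((-1/3 + 1/12*P)*(1-z)^4*(z-1)) * h3
    + ((-1/24)*(1-z)^4) * h4

lemma Qkey (p : ℕ) (hodd : Odd p) (z : ℂ) (hzp : z ^ p = 1) :
    ∑ m ∈ range p, Qcoef p m * z ^ m = 16 / (1 + z) ^ 4 := by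
  set P : ℂ := (p : ℂ) with hP
  set w : ℂ := -z with hw
  have hwp : w ^ p = -1 := by rw [hw, hodd.neg_pow, hzp]
  have hwne : w ≠ 1 := fun h => by rw [h, one_pow] at hwp; norm_num at hwp
  have hz1 : w - 1 ≠ 0 := sub_ne_zero_of_ne hwne
  have h1z : (1 + z) ≠ 0 := fun h => hz1 (by rw [hw]; linear_combination -h)
  have hsplit : ∑ m ∈ range p, Qcoef p m * z ^ m
      = (8 - 22/3*P + 1/3*P^3) * (∑ m ∈ range p, w ^ m)
        + (44/3 - 8*P) * (∑ m ∈ range p, (m : ℂ) * w ^ m)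
        + (8 - 2*P) * (∑ m ∈ range p, (m : ℂ) ^ 2 * w ^ m)
        + (4/3) * (∑ m ∈ range p, (m : ℂ) ^ 3 * w ^ m) := by
    simp only [Finset.mul_sum, ← Finset.sum_add_distrib]
    refine Finset.sum_congr rfl fun m _ => ?_
    have : w ^ m = (-1) ^ m * z ^ m := by rw [hw, neg_pow]
    rw [this]; simp only [Qcoef, Qf]; ring
  have h0 : (∑ m ∈ range p, w ^ m) * (w - 1) = -2 := by
    rw [geom_sum_mul, hwp]; norm_num
  have h1 := sum_pow1 w p; rw [hwp] at h1
  have h2 := sum_pow2 w p; rw [hwp] at h2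
  have h3 := sum_pow3 w p; rw [hwp] at h3
  have hzw : (1 + z) = 1 - w := by rw [hw]; ring
  rw [hzw, eq_div_iff (pow_ne_zero 4 (by rw [← hzw]; exact h1z))]
  refine mul_right_cancel₀ (pow_ne_zero 5 hz1) ?_
  linear_combination ((1-w)^4*(w-1)^5) * hsplit
    + ((8 - 22/3*P + 1/3*P^3)*(1-w)^4*(w-1)^4) * h0
    + ((44/3 - 8*P)*(1-w)^4*(w-1)^3) * h1
    + ((8 - 2*P)*(1-w)^4*(w-1)^2) * h2
    + ((4/3)*(1-w)^4*(w-1)) * h3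

noncomputable def zet (p : ℕ) : ℂ := Complex.exp (2 * Real.pi * Complex.I / p)

lemma zet_prim (p : ℕ) (hp : 0 < p) : IsPrimitiveRoot (zet p) p :=
  Complex.isPrimitiveRoot_exp p hp.ne'

lemma rootsum (p : ℕ) (hp : 0 < p) (s : ℕ) :
    ∑ j ∈ Finset.Icc 1 (p - 1), (zet p ^ s) ^ j
      = if p ∣ s then (p : ℂ) - 1 else -1 := by
  have hprim := zet_prim p hp
  have hsplit : Finset.range p = insert 0 (Finset.Icc 1 (p - 1)) := by
    ext x; simp only [Finset.mem_range, Finset.mem_insert, Finset.mem_Icc]; omega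
  have hrange : ∑ j ∈ Finset.range p, (zet p ^ s) ^ j
      = if p ∣ s then (p : ℂ) else 0 := by
    by_cases h : p ∣ s
    · rw [if_pos h]
      have h1 : zet p ^ s = 1 := (hprim.pow_eq_one_iff_dvd s).mpr h
      simp [h1]
    · rw [if_neg h]
      have h1 : zet p ^ s ≠ 1 := fun hh => h ((hprim.pow_eq_one_iff_dvd s).mp hh)
      rw [geom_sum_eq h1]
      have : (zet p ^ s) ^ p = 1 := by
        rw [← pow_mul, mul_comm, pow_mul, hprim.pow_eq_one, one_pow]
      rw [this, sub_self, zero_div]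
  have h2 : ∑ j ∈ Finset.range p, (zet p ^ s) ^ j
      = 1 + ∑ j ∈ Finset.Icc 1 (p - 1), (zet p ^ s) ^ j := by
    rw [hsplit, Finset.sum_insert (by simp), pow_zero]
  rw [h2] at hrange
  by_cases h : p ∣ s
  · rw [if_pos h] at hrange ⊢; linear_combination hrange
  · rw [if_neg h] at hrange ⊢; linear_combination hrange

lemma genval (p : ℕ) (hp : 2 ≤ p) (g : ℕ → ℂ) (K s : ℂ) (hK : K ≠ 0)
    (hkey : ∀ z : ℂ, z ≠ 1 → z ^ p = 1 → ∑ m ∈ range p, g m * z ^ m = K / (1 - s * z) ^ 4)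
    (r : ℕ) (hr1 : 1 ≤ r) (hr2 : r ≤ p) :
    ∑ j ∈ Finset.Icc 1 (p - 1), (zet p ^ j) ^ r / (1 - s * zet p ^ j) ^ 4
      = ((p : ℂ) * g (p - r) - ∑ m ∈ range p, g m) / K := by
  have hprim := zet_prim p (by omega)
  have hterm : ∀ j ∈ Finset.Icc 1 (p - 1),
      (zet p ^ j) ^ r / (1 - s * zet p ^ j) ^ 4
        = (∑ m ∈ range p, g m * ((zet p ^ (m + r)) ^ j)) / K := by
    intro j hj
    simp only [Finset.mem_Icc] at hj
    have hne : zet p ^ j ≠ 1 := hprim.pow_ne_one_of_pos_of_lt (by omega) (by omega)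
    have hone : (zet p ^ j) ^ p = 1 := by
      rw [← pow_mul, mul_comm, pow_mul, hprim.pow_eq_one, one_pow]
    have hk := hkey (zet p ^ j) hne hone
    have hfix : ∀ m, g m * ((zet p ^ (m + r)) ^ j) = (g m * (zet p ^ j) ^ m) * (zet p ^ j) ^ r := by
      intro m
      rw [mul_assoc, ← pow_mul, ← pow_mul, ← pow_mul, ← pow_add]
      congr 2
      ring
    simp only [hfix]
    rw [← Finset.sum_mul, hk, div_mul_eq_mul_div, div_right_comm,
      mul_div_cancel_left₀ _ hK]
  rw [Finset.sum_congr rfl hterm, ← Finset.sum_div]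
  congr 1
  rw [Finset.sum_comm]
  have hinner : ∀ m ∈ range p,
      ∑ j ∈ Finset.Icc 1 (p - 1), g m * (zet p ^ (m + r)) ^ j
        = g m * (if p ∣ (m + r) then (p : ℂ) - 1 else -1) := by
    intro m _
    rw [← Finset.mul_sum, rootsum p (by omega)]
  rw [Finset.sum_congr rfl hinner]
  have hstep : ∀ m ∈ range p,
      g m * (if p ∣ (m + r) then (p : ℂ) - 1 else -1)
        = (if m = p - r then g m * (p : ℂ) else 0) - g m := by
    intro m hm
    simp only [Finset.mem_range] at hm
    by_cases h : m = p - r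
    · have : p ∣ (m + r) := by subst h; exact ⟨1, by omega⟩
      rw [if_pos ‹m = p - r›, if_pos this]; ring
    · have : ¬ p ∣ (m + r) := by
        rintro ⟨k, hkk⟩
        have hk1 : p * k < p * 2 := by omega
        have hk2 : k < 2 := Nat.lt_of_mul_lt_mul_left hk1
        have hk0 : k ≠ 0 := by rintro rfl; omega
        have hk3 : k = 1 := by omega
        subst hk3; omega
      rw [if_neg h, if_neg this]; ring
  rw [Finset.sum_congr rfl hstep, Finset.sum_sub_distrib, Finset.sum_ite_eq']
  rw [if_pos (by simp only [Finset.mem_range]; omega)]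
  ring

lemma gensym (p : ℕ) (hp : 0 < p) (s : ℂ) (hs : s ^ 2 = 1)
    (hden : ∀ j ∈ Finset.Icc 1 (p - 1), (1 : ℂ) - s * zet p ^ j ≠ 0) (r : ℤ) :
    ∑ j ∈ Finset.Icc 1 (p - 1), (zet p ^ j) ^ r / (1 - s * zet p ^ j) ^ 4
      = ∑ j ∈ Finset.Icc 1 (p - 1), (zet p ^ j) ^ (4 - r) / (1 - s * zet p ^ j) ^ 4 := by
  have hprim := zet_prim p hp
  have hz0 : zet p ≠ 0 := fun h => by
    have := hprim.pow_eq_one (M := ℂ)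
    rw [h] at this
    simp [zero_pow hp.ne'] at this
  refine Finset.sum_nbij' (fun j => p - j) (fun j => p - j) ?_ ?_ ?_ ?_ ?_
  · intro a ha; simp only [Finset.mem_Icc] at *; omega
  · intro a ha; simp only [Finset.mem_Icc] at *; omega
  · intro a ha; simp only [Finset.mem_Icc] at *; omega
  · intro a ha; simp only [Finset.mem_Icc] at *; omega
  · intro j hj
    simp only [Finset.mem_Icc] at hj
    have hmem : p - j ∈ Finset.Icc 1 (p - 1) := by simp only [Finset.mem_Icc]; omega
    set a : ℂ := zet p ^ j with ha
    have ha0 : a ≠ 0 := pow_ne_zero _ hz0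
    have hinv : zet p ^ (p - j) = a⁻¹ := by
      have h1 : zet p ^ (p - j) * a = 1 := by
        rw [ha, ← pow_add]
        have : p - j + j = p := by omega
        rw [this, hprim.pow_eq_one]
      field_simp at h1 ⊢
      linear_combination h1
    have hd1 : (1 : ℂ) - s * a ≠ 0 := hden j (by simp only [Finset.mem_Icc]; omega)
    have hd2 : (1 : ℂ) - s * a⁻¹ ≠ 0 := by
      have := hden (p - j) hmem
      rwa [hinv] at this
    rw [hinv]
    rw [div_eq_div_iff (pow_ne_zero 4 hd1) (pow_ne_zero 4 hd2)]
    have hx : (1 - s * a⁻¹) ^ 4 * a ^ 4 = (1 - s * a) ^ 4 := by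
      have h1 : ((1 - s * a⁻¹) * a) ^ 4 = (a - s) ^ 4 := by
        congr 1
        field_simp
      rw [← mul_pow] at *
      rw [h1]
      linear_combination (-((a^4 - 1)*(1 + s^2) - 4*s*(a^3 - a))) * hs
    have h2 : (a⁻¹) ^ (4 - r) = a ^ r * (a ^ 4)⁻¹ := by
      rw [inv_zpow, ← zpow_neg, show -(4 - r) = r + -(4:ℤ) by ring, zpow_add₀ ha0, zpow_neg,
        show (4:ℤ) = ((4:ℕ):ℤ) by norm_num, zpow_natCast]
    have h3 : (1 - s * a⁻¹) ^ 4 = (a ^ 4)⁻¹ * (1 - s * a) ^ 4 := by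
      rw [eq_comm, mul_comm, ← div_eq_mul_inv, div_eq_iff (pow_ne_zero 4 ha0), ← hx]
    rw [h2, h3]
    ring

lemma double_sum (p d : ℕ) (hpd : p = 2 * d + 1) (f : ℕ → ℝ)
    (hsym : ∀ j, 1 ≤ j → j ≤ d → f (p - j) = f j) :
    ∑ j ∈ Finset.Icc 1 (p - 1), f j = 2 * ∑ j ∈ Finset.Icc 1 d, f j := by
  have h1 : Finset.Icc 1 (p - 1) = Finset.Icc 1 d ∪ Finset.Icc (d + 1) (p - 1) := by
    ext x; simp only [Finset.mem_Icc, Finset.mem_union]; omega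
  have hdisj : Disjoint (Finset.Icc 1 d) (Finset.Icc (d + 1) (p - 1)) := by
    rw [Finset.disjoint_left]
    intro a h1 h2
    simp only [Finset.mem_Icc] at *
    omega
  rw [h1, Finset.sum_union hdisj]
  have h2 : ∑ j ∈ Finset.Icc (d + 1) (p - 1), f j = ∑ j ∈ Finset.Icc 1 d, f j := by
    refine Finset.sum_nbij' (fun j => p - j) (fun j => p - j) ?_ ?_ ?_ ?_ ?_
    · intro a ha; simp only [Finset.mem_Icc] at *; omega
    · intro a ha; simp only [Finset.mem_Icc] at *; omega
    · intro a ha; simp only [Finset.mem_Icc] at *; omega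
    · intro a ha; simp only [Finset.mem_Icc] at *; omega
    · intro a ha
      simp only [Finset.mem_Icc] at ha
      show f a = f (p - a)
      have hthis := hsym (p - a) (by omega) (by omega)
      rw [show p - (p - a) = a by omega] at hthis
      exact hthis
  rw [h2]
  ring

lemma exp_pair_cos (w : ℂ) :
    Complex.exp (w * Complex.I) + (Complex.exp (w * Complex.I))⁻¹ = 2 * Complex.cos w := by
  rw [← Complex.exp_neg, show -(w * Complex.I) = (-w) * Complex.I by ring,
    Complex.exp_mul_I, Complex.exp_mul_I, Complex.cos_neg, Complex.sin_neg]
  ring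

lemma exp_pair_sin (w : ℂ) :
    Complex.exp (w * Complex.I) - (Complex.exp (w * Complex.I))⁻¹
      = 2 * Complex.sin w * Complex.I := by
  rw [← Complex.exp_neg, show -(w * Complex.I) = (-w) * Complex.I by ring,
    Complex.exp_mul_I, Complex.exp_mul_I, Complex.cos_neg, Complex.sin_neg]
  ring

/-- per-term conversion, `sin` denominator. -/
lemma termSin (p k j : ℕ) (hp : 0 < p) (hne : zet p ^ j ≠ 1)
    (hsin : Real.sin (Real.pi * j / p) ≠ 0) :
    ((Real.cos (2 * Real.pi * k * j / p) / Real.sin (Real.pi * j / p) ^ 4 : ℝ) : ℂ)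
      = 8 * ((zet p ^ j) ^ ((k : ℤ) + 2) + (zet p ^ j) ^ (2 - (k : ℤ)))
          / (1 - zet p ^ j) ^ 4 := by
  have hp0 : (p : ℂ) ≠ 0 := Nat.cast_ne_zero.mpr hp.ne'
  set x : ℝ := Real.pi * j / p with hx
  set u : ℂ := Complex.exp ((x : ℂ) * Complex.I) with hu
  have hu0 : u ≠ 0 := Complex.exp_ne_zero _
  have hu2 : u ^ 2 = zet p ^ j := by
    rw [hu, sq, ← Complex.exp_add, zet, ← Complex.exp_nat_mul]
    congr 1
    rw [hx]
    push_cast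
    field_simp
    ring
  set b : ℂ := u ^ (2 * k) with hb
  have hb0 : b ≠ 0 := pow_ne_zero _ hu0
  have hbexp : b = Complex.exp (((2 * Real.pi * k * j / p : ℝ) : ℂ) * Complex.I) := by
    rw [hb, hu, ← Complex.exp_nat_mul]
    congr 1
    rw [hx]
    push_cast
    field_simp
  have hR1 : b + b⁻¹ = 2 * Complex.cos ((2 * Real.pi * k * j / p : ℝ) : ℂ) := by
    rw [hbexp]; exact exp_pair_cos _
  have hR2 : u - u⁻¹ = 2 * Complex.sin (x : ℂ) * Complex.I := by
    rw [hu]; exact exp_pair_sin _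
  have hS : (Real.sin x : ℂ) = Complex.sin (x : ℂ) := Complex.ofReal_sin x
  have hC : (Real.cos (2 * Real.pi * k * j / p) : ℝ) = Real.cos (2 * Real.pi * k * j / p) := rfl
  -- nonvanishing
  have hSne : Complex.sin (x : ℂ) ≠ 0 := by
    rw [← hS]; exact_mod_cast Complex.ofReal_ne_zero.mpr hsin
  have hu21 : u ^ 2 ≠ 1 := by rw [hu2]; exact hne
  have h1mu : (1 : ℂ) - u ^ 2 ≠ 0 := fun h => hu21 (by linear_combination -h)
  -- key algebraic identities
  set S : ℂ := Complex.sin (x : ℂ) with hSdef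
  have hS2 : (u ^ 2 - 1) ^ 2 = -4 * S ^ 2 * u ^ 2 := by
    have hR2' : u ^ 2 - 1 = 2 * S * Complex.I * u := by
      have := hR2
      field_simp at this
      linear_combination this
    linear_combination (u ^ 2 - 1 + 2 * S * Complex.I * u) * hR2'
      + 4 * S ^ 2 * u ^ 2 * Complex.I_sq
  have hS4 : (1 - u ^ 2) ^ 4 = 16 * S ^ 4 * u ^ 4 := by
    linear_combination ((u ^ 2 - 1) ^ 2 + (-4 * S ^ 2 * u ^ 2)) * hS2
  -- the zeta powers
  have hz1 : (zet p ^ j) ^ ((k : ℤ) + 2) = b * u ^ 4 := by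
    rw [← hu2, show (k : ℤ) + 2 = ((k + 2 : ℕ) : ℤ) by push_cast; ring, zpow_natCast,
      ← pow_mul, hb, ← pow_add, show 2 * (k + 2) = 2 * k + 4 by ring]
  have hz2 : (zet p ^ j) ^ (2 - (k : ℤ)) = u ^ 4 * b⁻¹ := by
    rw [← hu2, show (2 : ℤ) - (k : ℤ) = ((2:ℕ) : ℤ) + -((k:ℕ) : ℤ) by push_cast; ring,
      zpow_add₀ (pow_ne_zero 2 hu0), zpow_natCast, zpow_neg, zpow_natCast, ← pow_mul, ← pow_mul,
      hb, show 2 * 2 = 4 by ring]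
  rw [hz1, hz2]
  push_cast
  push_cast at hR1
  rw [← hu2]
  rw [div_eq_div_iff (pow_ne_zero 4 hSne) (pow_ne_zero 4 h1mu)]
  linear_combination Complex.cos (2 * (Real.pi : ℂ) * k * j / p) * hS4
    - 8 * u ^ 4 * S ^ 4 * hR1

/-- per-term conversion, `cos` denominator. -/
lemma termCos (p k j : ℕ) (hp : 0 < p) (hne2 : zet p ^ j ≠ -1)
    (hcos : Real.cos (Real.pi * j / p) ≠ 0) :
    ((Real.cos (2 * Real.pi * k * j / p) / Real.cos (Real.pi * j / p) ^ 4 : ℝ) : ℂ)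
      = 8 * ((zet p ^ j) ^ ((k : ℤ) + 2) + (zet p ^ j) ^ (2 - (k : ℤ)))
          / (1 + zet p ^ j) ^ 4 := by
  have hp0 : (p : ℂ) ≠ 0 := Nat.cast_ne_zero.mpr hp.ne'
  set x : ℝ := Real.pi * j / p with hx
  set u : ℂ := Complex.exp ((x : ℂ) * Complex.I) with hu
  have hu0 : u ≠ 0 := Complex.exp_ne_zero _
  have hu2 : u ^ 2 = zet p ^ j := by
    rw [hu, sq, ← Complex.exp_add, zet, ← Complex.exp_nat_mul]
    congr 1
    rw [hx]
    push_cast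
    field_simp
    ring
  set b : ℂ := u ^ (2 * k) with hb
  have hb0 : b ≠ 0 := pow_ne_zero _ hu0
  have hbexp : b = Complex.exp (((2 * Real.pi * k * j / p : ℝ) : ℂ) * Complex.I) := by
    rw [hb, hu, ← Complex.exp_nat_mul]
    congr 1
    rw [hx]
    push_cast
    field_simp
  have hR1 : b + b⁻¹ = 2 * Complex.cos ((2 * Real.pi * k * j / p : ℝ) : ℂ) := by
    rw [hbexp]; exact exp_pair_cos _
  have hRc : u + u⁻¹ = 2 * Complex.cos (x : ℂ) := by
    rw [hu]; exact exp_pair_cos _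
  set C : ℂ := Complex.cos (x : ℂ) with hCdef
  have hCne : C ≠ 0 := by
    rw [hCdef, ← Complex.ofReal_cos]
    exact_mod_cast Complex.ofReal_ne_zero.mpr hcos
  have hu21 : u ^ 2 ≠ -1 := by rw [hu2]; exact hne2
  have h1mu : (1 : ℂ) + u ^ 2 ≠ 0 := fun h => hu21 (by linear_combination h)
  have hRc' : u ^ 2 + 1 = 2 * C * u := by
    have := hRc
    field_simp at this
    linear_combination this
  have hC4 : (1 + u ^ 2) ^ 4 = 16 * C ^ 4 * u ^ 4 := by
    have h2 : (u ^ 2 + 1) ^ 2 = 4 * C ^ 2 * u ^ 2 := by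
      linear_combination (u ^ 2 + 1 + 2 * C * u) * hRc'
    linear_combination ((u ^ 2 + 1) ^ 2 + 4 * C ^ 2 * u ^ 2) * h2
  have hz1 : (zet p ^ j) ^ ((k : ℤ) + 2) = b * u ^ 4 := by
    rw [← hu2, show (k : ℤ) + 2 = ((k + 2 : ℕ) : ℤ) by push_cast; ring, zpow_natCast,
      ← pow_mul, hb, ← pow_add, show 2 * (k + 2) = 2 * k + 4 by ring]
  have hz2 : (zet p ^ j) ^ (2 - (k : ℤ)) = u ^ 4 * b⁻¹ := by
    rw [← hu2, show (2 : ℤ) - (k : ℤ) = ((2:ℕ) : ℤ) + -((k:ℕ) : ℤ) by push_cast; ring,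
      zpow_add₀ (pow_ne_zero 2 hu0), zpow_natCast, zpow_neg, zpow_natCast, ← pow_mul, ← pow_mul,
      hb, show 2 * 2 = 4 by ring]
  rw [hz1, hz2]
  push_cast
  push_cast at hR1
  rw [← hu2]
  rw [div_eq_div_iff (pow_ne_zero 4 hCne) (pow_ne_zero 4 h1mu)]
  linear_combination Complex.cos (2 * (Real.pi : ℂ) * k * j / p) * hC4
    - 8 * u ^ 4 * C ^ 4 * hR1

/-- real per-term rewrite for the `D` sum. -/
lemma stepSin (p c j : ℕ) (hs : Real.sin (Real.pi * j / p) ≠ 0) :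
    Real.sin (Real.pi * j * (2 * c + 1) / p) * Real.sin (Real.pi * j / p) ^ (1 - 2 * ((2:ℕ) : ℤ))
      = (Real.cos (2 * Real.pi * c * j / p) - Real.cos (2 * Real.pi * (c + 1) * j / p))
          / (2 * Real.sin (Real.pi * j / p) ^ 4) := by
  have h1 : (2 : ℝ) * Real.pi * c * j / p = ((Real.pi * j * (2 * c + 1) / p) + (2 * Real.pi * c * j / p - Real.pi * j * (2*c+1)/p)) := by ring
  have hA : Real.cos (2 * Real.pi * c * j / p) - Real.cos (2 * Real.pi * (c + 1) * j / p)
      = 2 * Real.sin (Real.pi * j * (2 * c + 1) / p) * Real.sin (Real.pi * j / p) := by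
    rw [Real.cos_sub_cos]
    have e1 : (2 * Real.pi * c * j / p + 2 * Real.pi * (c + 1) * j / p) / 2
        = Real.pi * j * (2 * c + 1) / p := by ring
    have e2 : (2 * Real.pi * c * j / p - 2 * Real.pi * (c + 1) * j / p) / 2
        = -(Real.pi * j / p) := by ring
    rw [e1, e2, Real.sin_neg]
    ring
  rw [hA, show (1 - 2 * ((2:ℕ) : ℤ)) = -(3 : ℤ) by norm_num, show (-(3:ℤ)) = -((3:ℕ) : ℤ) by norm_num,
    zpow_neg, zpow_natCast]
  field_simp

/-- real per-term rewrite for the `δ` sum. -/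
lemma stepCos (p c j : ℕ) (hc : Real.cos (Real.pi * j / p) ≠ 0) :
    Real.sin (Real.pi * j * (2 * c + 1) / p) * Real.sin (Real.pi * j / p)
        * Real.cos (Real.pi * j / p) ^ (-(2 * ((2:ℕ) : ℤ)))
      = (Real.cos (2 * Real.pi * c * j / p) - Real.cos (2 * Real.pi * (c + 1) * j / p))
          / (2 * Real.cos (Real.pi * j / p) ^ 4) := by
  have hA : Real.cos (2 * Real.pi * c * j / p) - Real.cos (2 * Real.pi * (c + 1) * j / p)
      = 2 * Real.sin (Real.pi * j * (2 * c + 1) / p) * Real.sin (Real.pi * j / p) := by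
    rw [Real.cos_sub_cos]
    have e1 : (2 * Real.pi * c * j / p + 2 * Real.pi * (c + 1) * j / p) / 2
        = Real.pi * j * (2 * c + 1) / p := by ring
    have e2 : (2 * Real.pi * c * j / p - 2 * Real.pi * (c + 1) * j / p) / 2
        = -(Real.pi * j / p) := by ring
    rw [e1, e2, Real.sin_neg]
    ring
  rw [hA, show (-(2 * ((2:ℕ) : ℤ))) = -((4:ℕ) : ℤ) by norm_num, zpow_neg, zpow_natCast]
  field_simp

/-- symmetry of the summands under `j ↦ p - j`. -/
lemma symmSin (p d k j : ℕ) (hpd : p = 2 * d + 1) (hj1 : 1 ≤ j) (hj2 : j ≤ d) :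
    Real.cos (2 * Real.pi * k * (p - j : ℕ) / p) / Real.sin (Real.pi * (p - j : ℕ) / p) ^ 4
      = Real.cos (2 * Real.pi * k * j / p) / Real.sin (Real.pi * j / p) ^ 4 := by
  have hp0 : (p : ℝ) ≠ 0 := by
    have : 0 < p := by omega
    exact_mod_cast this.ne'
  have hcast : ((p - j : ℕ) : ℝ) = (p : ℝ) - j := by
    have hjp : j ≤ p := by omega
    push_cast [Nat.cast_sub hjp]
    ring
  have hang1 : 2 * Real.pi * k * ((p - j : ℕ) : ℝ) / p = k * (2 * Real.pi) - 2 * Real.pi * k * j / p := by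
    rw [hcast]
    field_simp
  have hang2 : Real.pi * ((p - j : ℕ) : ℝ) / p = Real.pi - Real.pi * j / p := by
    rw [hcast]
    field_simp
  rw [hang1, hang2, Real.cos_nat_mul_two_pi_sub, Real.sin_pi_sub]

/-- symmetry of the summands under `j ↦ p - j`, cosine denominator. -/
lemma symmCos (p d k j : ℕ) (hpd : p = 2 * d + 1) (hj1 : 1 ≤ j) (hj2 : j ≤ d) :
    Real.cos (2 * Real.pi * k * (p - j : ℕ) / p) / Real.cos (Real.pi * (p - j : ℕ) / p) ^ 4
      = Real.cos (2 * Real.pi * k * j / p) / Real.cos (Real.pi * j / p) ^ 4 := by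
  have hp0 : (p : ℝ) ≠ 0 := by
    have : 0 < p := by omega
    exact_mod_cast this.ne'
  have hcast : ((p - j : ℕ) : ℝ) = (p : ℝ) - j := by
    have hjp : j ≤ p := by omega
    push_cast [Nat.cast_sub hjp]
    ring
  have hang1 : 2 * Real.pi * k * ((p - j : ℕ) : ℝ) / p = k * (2 * Real.pi) - 2 * Real.pi * k * j / p := by
    rw [hcast]
    field_simp
  have hang2 : Real.pi * ((p - j : ℕ) : ℝ) / p = Real.pi - Real.pi * j / p := by
    rw [hcast]
    field_simp
  rw [hang1, hang2, Real.cos_nat_mul_two_pi_sub, Real.cos_pi_sub]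
  rw [show (-Real.cos (Real.pi * j / p)) ^ 4 = Real.cos (Real.pi * j / p) ^ 4 by ring]

end VerlindeAux

open Finset Complex in
/-- In rank `g = 2`:
`(1/2)·(D_2^{(2c)}(p) + δ_2^{(2c)}(p)) = (1/24)·(c+1)·(p+1)·(p-2c-1)·(p-c)`. -/
theorem stmt18 (p d c : ℕ) (hp : p.Prime) (hp5 : 5 ≤ p) (hd : d = (p - 1) / 2)
    (hc : c ≤ d - 1) :
    1 / 2 * (Dverl 2 c p + deltaVerl 2 c p) =
      1 / 24 * ((c : ℝ) + 1) * ((p : ℝ) + 1) * ((p : ℝ) - 2 * c - 1) * ((p : ℝ) - c) := by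
  have hodd : Odd p := hp.odd_of_ne_two (by omega)
  obtain ⟨t0, ht0⟩ := hodd
  have hodd' : Odd p := ⟨t0, ht0⟩
  have hpd : p = 2 * d + 1 := by omega
  have hd2 : 2 ≤ d := by omega
  have hc1 : c + 1 ≤ d := by omega
  have hppos : 0 < p := by omega
  have hpR : (p : ℝ) ≠ 0 := by exact_mod_cast hppos.ne'
  have hpC : (p : ℂ) ≠ 0 := by exact_mod_cast hppos.ne'
  have hπ := Real.pi_pos
  -- nonvanishing of real sin/cos
  have hsin : ∀ j : ℕ, 1 ≤ j → j ≤ p - 1 → Real.sin (Real.pi * j / p) ≠ 0 := by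
    intro j h1 h2
    have hlt : (j : ℝ) < p := by exact_mod_cast (by omega : j < p)
    have hx1 : 0 < Real.pi * j / p := by
      apply div_pos
      · have : (0:ℝ) < j := by exact_mod_cast (by omega : 0 < j)
        positivity
      · exact_mod_cast hppos
    have hx2 : Real.pi * j / p < Real.pi := by
      rw [div_lt_iff₀ (by exact_mod_cast hppos)]
      have : (0:ℝ) < Real.pi := hπ
      nlinarith
    exact (Real.sin_pos_of_pos_of_lt_pi hx1 hx2).ne'
  have hcos : ∀ j : ℕ, 1 ≤ j → j ≤ p - 1 → Real.cos (Real.pi * j / p) ≠ 0 := by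
    intro j h1 h2 hzero
    rw [Real.cos_eq_zero_iff] at hzero
    obtain ⟨n, hn⟩ := hzero
    have hne : (2 * (j:ℝ)) = (2*n+1) * p := by
      have hp2 : (0:ℝ) < p := by exact_mod_cast hppos
      field_simp at hn
      nlinarith [hn, hπ]
    have hZ : (2 * (j:ℤ)) = (2*n+1) * p := by exact_mod_cast hne
    have hoddr : Odd ((2*n+1) * (p:ℤ)) := by
      refine Odd.mul ⟨n, by ring⟩ ?_
      exact_mod_cast hodd'
    rw [← hZ] at hoddr
    exact (Int.not_odd_iff_even.mpr ⟨(j:ℤ), by ring⟩) hoddr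
  -- zeta facts
  have hprim := zet_prim p hppos
  have hzne1 : ∀ j : ℕ, 1 ≤ j → j ≤ p - 1 → zet p ^ j ≠ 1 := by
    intro j h1 h2
    exact hprim.pow_ne_one_of_pos_of_lt (by omega) (by omega)
  have hznem1 : ∀ j : ℕ, 1 ≤ j → j ≤ p - 1 → zet p ^ j ≠ -1 := by
    intro j h1 h2 h
    have hone : (zet p ^ j) ^ p = 1 := by
      rw [← pow_mul, mul_comm, pow_mul, hprim.pow_eq_one, one_pow]
    rw [h, hodd'.neg_one_pow] at hone
    norm_num at hone
  have hdenS : ∀ j ∈ Finset.Icc 1 (p-1), (1:ℂ) - 1 * zet p ^ j ≠ 0 := by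
    intro j hj h
    simp only [Finset.mem_Icc] at hj
    exact hzne1 j hj.1 hj.2 (by linear_combination -h)
  have hdenC : ∀ j ∈ Finset.Icc 1 (p-1), (1:ℂ) - (-1) * zet p ^ j ≠ 0 := by
    intro j hj h
    simp only [Finset.mem_Icc] at hj
    exact hznem1 j hj.1 hj.2 (by linear_combination h)
  -- complex values of the full sums
  have hK4 : ∀ k : ℕ, k ≤ d →
      ((∑ j ∈ Finset.Icc 1 (p-1), Real.cos (2*Real.pi*k*j/p) / Real.sin (Real.pi*j/p)^4 : ℝ) : ℂ)
        = 16 * ((p:ℂ) * Pcoef p (p - (k+2)) - ∑ m ∈ range p, Pcoef p m) / p := by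
    intro k hk
    rw [Complex.ofReal_sum]
    rw [Finset.sum_congr rfl (fun j hj => by
      simp only [Finset.mem_Icc] at hj
      exact termSin p k j hppos (hzne1 j hj.1 hj.2) (hsin j hj.1 hj.2))]
    rw [Finset.sum_congr rfl (fun j _ => by
      ring :
      ∀ j ∈ Finset.Icc 1 (p-1),
        8 * ((zet p ^ j) ^ ((k:ℤ)+2) + (zet p ^ j) ^ (2-(k:ℤ))) / (1 - zet p ^ j) ^ 4
          = 8 * ((zet p ^ j) ^ ((k:ℤ)+2) / (1 - 1 * zet p ^ j) ^ 4)
            + 8 * ((zet p ^ j) ^ (2-(k:ℤ)) / (1 - 1 * zet p ^ j) ^ 4))]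
    rw [Finset.sum_add_distrib, ← Finset.mul_sum, ← Finset.mul_sum]
    rw [gensym p hppos 1 (by norm_num) hdenS (2-(k:ℤ)),
      show (4:ℤ) - (2 - (k:ℤ)) = (k:ℤ)+2 by ring]
    rw [Finset.sum_congr rfl (fun j _ => by
      rw [show ((k:ℤ)+2) = ((k+2:ℕ):ℤ) by push_cast; ring, zpow_natCast] :
      ∀ j ∈ Finset.Icc 1 (p-1),
        (zet p ^ j) ^ ((k:ℤ)+2) / (1 - 1 * zet p ^ j) ^ 4
          = (zet p ^ j) ^ (k+2) / (1 - 1 * zet p ^ j) ^ 4)]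
    rw [genval p (by omega) (Pcoef p) (p:ℂ) 1 hpC
      (fun z h1 h2 => by rw [one_mul]; exact Pkey p z h1 h2) (k+2) (by omega) (by omega)]
    ring
  have hL4 : ∀ k : ℕ, k ≤ d →
      ((∑ j ∈ Finset.Icc 1 (p-1), Real.cos (2*Real.pi*k*j/p) / Real.cos (Real.pi*j/p)^4 : ℝ) : ℂ)
        = (p:ℂ) * Qcoef p (p - (k+2)) - ∑ m ∈ range p, Qcoef p m := by
    intro k hk
    rw [Complex.ofReal_sum]
    rw [Finset.sum_congr rfl (fun j hj => by
      simp only [Finset.mem_Icc] at hj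
      exact termCos p k j hppos (hznem1 j hj.1 hj.2) (hcos j hj.1 hj.2))]
    rw [Finset.sum_congr rfl (fun j _ => by
      ring :
      ∀ j ∈ Finset.Icc 1 (p-1),
        8 * ((zet p ^ j) ^ ((k:ℤ)+2) + (zet p ^ j) ^ (2-(k:ℤ))) / (1 + zet p ^ j) ^ 4
          = 8 * ((zet p ^ j) ^ ((k:ℤ)+2) / (1 - (-1) * zet p ^ j) ^ 4)
            + 8 * ((zet p ^ j) ^ (2-(k:ℤ)) / (1 - (-1) * zet p ^ j) ^ 4))]
    rw [Finset.sum_add_distrib, ← Finset.mul_sum, ← Finset.mul_sum]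
    rw [gensym p hppos (-1) (by norm_num) hdenC (2-(k:ℤ)),
      show (4:ℤ) - (2 - (k:ℤ)) = (k:ℤ)+2 by ring]
    rw [Finset.sum_congr rfl (fun j _ => by
      rw [show ((k:ℤ)+2) = ((k+2:ℕ):ℤ) by push_cast; ring, zpow_natCast] :
      ∀ j ∈ Finset.Icc 1 (p-1),
        (zet p ^ j) ^ ((k:ℤ)+2) / (1 - (-1) * zet p ^ j) ^ 4
          = (zet p ^ j) ^ (k+2) / (1 - (-1) * zet p ^ j) ^ 4)]
    rw [genval p (by omega) (Qcoef p) 16 (-1) (by norm_num)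
      (fun z h1 h2 => by
        rw [show (1:ℂ) - (-1) * z = 1 + z by ring]
        exact Qkey p hodd' z h2) (k+2) (by omega) (by omega)]
    field_simp
    ring
  -- real reductions to half sums
  have hsum1 : ∀ k : ℕ, ∑ j ∈ Finset.Icc 1 d, Real.cos (2*Real.pi*k*j/p) / Real.sin (Real.pi*j/p)^4
      = (∑ j ∈ Finset.Icc 1 (p-1), Real.cos (2*Real.pi*k*j/p) / Real.sin (Real.pi*j/p)^4) / 2 := by
    intro k
    rw [double_sum p d hpd _ (fun j h1 h2 => symmSin p d k j hpd h1 h2)]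
    ring
  have hsum2 : ∀ k : ℕ, ∑ j ∈ Finset.Icc 1 d, Real.cos (2*Real.pi*k*j/p) / Real.cos (Real.pi*j/p)^4
      = (∑ j ∈ Finset.Icc 1 (p-1), Real.cos (2*Real.pi*k*j/p) / Real.cos (Real.pi*j/p)^4) / 2 := by
    intro k
    rw [double_sum p d hpd _ (fun j h1 h2 => symmCos p d k j hpd h1 h2)]
    ring
  have hD : Dverl 2 c p = (p:ℝ)/16 *
      ((∑ j ∈ Finset.Icc 1 (p-1), Real.cos (2*Real.pi*c*j/p) / Real.sin (Real.pi*j/p)^4)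
        - (∑ j ∈ Finset.Icc 1 (p-1), Real.cos (2*Real.pi*(c+1)*j/p) / Real.sin (Real.pi*j/p)^4)) := by
    rw [Dverl, ← hd]
    rw [Finset.sum_congr rfl (fun j hj => by
      simp only [Finset.mem_Icc] at hj
      exact stepSin p c j (hsin j hj.1 (by omega)))]
    rw [Finset.sum_congr rfl (fun j _ => by
      ring :
      ∀ j ∈ Finset.Icc 1 d,
        (Real.cos (2*Real.pi*c*j/p) - Real.cos (2*Real.pi*(c+1)*j/p))
            / (2 * Real.sin (Real.pi*j/p)^4)
          = (Real.cos (2*Real.pi*c*j/p) / Real.sin (Real.pi*j/p)^4) / 2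
            - (Real.cos (2*Real.pi*(c+1)*j/p) / Real.sin (Real.pi*j/p)^4) / 2)]
    have e2 := hsum1 (c+1)
    push_cast at e2
    rw [Finset.sum_sub_distrib, ← Finset.sum_div, ← Finset.sum_div, hsum1 c, e2]
    norm_num
    ring
  have hδ : deltaVerl 2 c p = (-1:ℝ)^c/(16*p) *
      ((∑ j ∈ Finset.Icc 1 (p-1), Real.cos (2*Real.pi*c*j/p) / Real.cos (Real.pi*j/p)^4)
        - (∑ j ∈ Finset.Icc 1 (p-1), Real.cos (2*Real.pi*(c+1)*j/p) / Real.cos (Real.pi*j/p)^4)) := by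
    rw [deltaVerl, ← hd]
    rw [Finset.sum_congr rfl (fun j hj => by
      simp only [Finset.mem_Icc] at hj
      exact stepCos p c j (hcos j hj.1 (by omega)))]
    rw [Finset.sum_congr rfl (fun j _ => by
      ring :
      ∀ j ∈ Finset.Icc 1 d,
        (Real.cos (2*Real.pi*c*j/p) - Real.cos (2*Real.pi*(c+1)*j/p))
            / (2 * Real.cos (Real.pi*j/p)^4)
          = (Real.cos (2*Real.pi*c*j/p) / Real.cos (Real.pi*j/p)^4) / 2
            - (Real.cos (2*Real.pi*(c+1)*j/p) / Real.cos (Real.pi*j/p)^4) / 2)]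
    have e2 := hsum2 (c+1)
    push_cast at e2
    rw [Finset.sum_sub_distrib, ← Finset.sum_div, ← Finset.sum_div, hsum2 c, e2]
    rw [show (1 - ((2:ℕ):ℤ)) = -(1:ℤ) by norm_num]
    norm_num
    ring
  -- specialized complex values
  have hKc := hK4 c (by omega)
  have hKc1 := hK4 (c+1) (by omega)
  have hLc := hL4 c (by omega)
  have hLc1 := hL4 (c+1) (by omega)
  simp only [Nat.cast_add, Nat.cast_one] at hKc1 hLc1
  rw [show c + 1 + 2 = c + 3 from by omega] at hKc1 hLc1
  push_cast at hKc hKc1 hLc hLc1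
  -- coefficient evaluations
  have hPc1 : Pcoef p (p - (c+2)) = Pf (p:ℂ) ((p:ℂ) - c - 2) := by
    unfold Pcoef
    congr 1
    rw [Nat.cast_sub (show c+2 ≤ p by omega)]
    push_cast
    ring
  have hPc2 : Pcoef p (p - (c+3)) = Pf (p:ℂ) ((p:ℂ) - c - 3) := by
    unfold Pcoef
    congr 1
    rw [Nat.cast_sub (show c+3 ≤ p by omega)]
    push_cast
    ring
  have hQc1 : Qcoef p (p - (c+2)) = -(-1:ℂ)^c * Qf (p:ℂ) ((p:ℂ) - c - 2) := by
    unfold Qcoef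
    rw [show ((p - (c+2) : ℕ) : ℂ) = (p:ℂ) - c - 2 from by
      rw [Nat.cast_sub (show c+2 ≤ p by omega)]; push_cast; ring]
    rw [show p - (c+2) = 2*(d-c-1) + (c+1) from by omega, pow_add, pow_mul]
    norm_num [pow_succ]
  have hQc2 : Qcoef p (p - (c+3)) = (-1:ℂ)^c * Qf (p:ℂ) ((p:ℂ) - c - 3) := by
    unfold Qcoef
    rw [show ((p - (c+3) : ℕ) : ℂ) = (p:ℂ) - c - 3 from by
      rw [Nat.cast_sub (show c+3 ≤ p by omega)]; push_cast; ring]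
    rw [show p - (c+3) = 2*(d-c-1) + c from by omega, pow_add, pow_mul]
    norm_num
  have ht2 : ((-1:ℂ)^c)^2 = 1 := by
    rw [← pow_mul, mul_comm, pow_mul]
    norm_num
  -- complex values of Dverl and deltaVerl
  have hDc : ((Dverl 2 c p : ℝ) : ℂ)
      = (p:ℂ) * (Pf (p:ℂ) ((p:ℂ) - c - 2) - Pf (p:ℂ) ((p:ℂ) - c - 3)) := by
    rw [hD]
    push_cast
    rw [hKc, hKc1, hPc1, hPc2]
    have expand : (p:ℂ)/16*(16*((p:ℂ)*Pf (p:ℂ) ((p:ℂ) - c - 2) - ∑ m ∈ range p, Pcoef p m)/(p:ℂ)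
          - 16*((p:ℂ)*Pf (p:ℂ) ((p:ℂ) - c - 3) - ∑ m ∈ range p, Pcoef p m)/(p:ℂ))
        = ((p:ℂ)*Pf (p:ℂ) ((p:ℂ) - c - 2) - (p:ℂ)*Pf (p:ℂ) ((p:ℂ) - c - 3))*((p:ℂ)/(p:ℂ)) := by
      ring
    rw [expand, div_self hpC]
    ring
  have hdel : ((deltaVerl 2 c p : ℝ) : ℂ)
      = -(Qf (p:ℂ) ((p:ℂ) - c - 2) + Qf (p:ℂ) ((p:ℂ) - c - 3))/16 := by
    rw [hδ]
    push_cast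
    rw [hLc, hLc1, hQc1, hQc2]
    have expand : (-1:ℂ)^c/(16*(p:ℂ))*(((p:ℂ)*(-(-1:ℂ)^c * Qf (p:ℂ) ((p:ℂ) - c - 2)) - ∑ m ∈ range p, Qcoef p m)
          - ((p:ℂ)*((-1:ℂ)^c * Qf (p:ℂ) ((p:ℂ) - c - 3)) - ∑ m ∈ range p, Qcoef p m))
        = ((-1:ℂ)^c)^2 * (-(Qf (p:ℂ) ((p:ℂ) - c - 2) + Qf (p:ℂ) ((p:ℂ) - c - 3)))/16*((p:ℂ)/(p:ℂ)) := by
      ring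
    rw [expand, ht2, div_self hpC]
    ring
  -- final assembly
  rw [← Complex.ofReal_inj]
  push_cast
  rw [hDc, hdel]
  simp only [Pf, Qf]
  ring
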